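/- Let F be the family of all subsets of [5] of size at most 3 and A, B i.i.d. uniform on F. Then H(A) = log₂ 26 and H(A ∪ B) < H(A). -/

import Mathlib

open Finset

/-- Base-2 Shannon entropy of a probability distribution `p` supported on `s`. -/
noncomputable def entropy {α : Type*} (s : Finset α) (p : α → ℝ) : ℝ :=
  ∑ x ∈ s, -(p x * Real.logb 2 (p x))

/-- The family of all subsets of `[5]` of size at most 3. -/
def F9 : Finset (Finset (Fin 5)) := Finset.univ.filter (fun S => S.card ≤ 3)

/-- Distribution of `A ∪ B` where `A, B` are i.i.d. uniform on `F9`. -/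
noncomputable def unionDist9 (S : Finset (Fin 5)) : ℝ :=
  (((F9 ×ˢ F9).filter (fun q => q.1 ∪ q.2 = S)).card : ℝ) / ((F9 ×ˢ F9).card : ℝ)

set_option maxRecDepth 100000
set_option maxHeartbeats 4000000

lemma hcount9 : ∀ S : Finset (Fin 5),
    ((F9 ×ˢ F9).filter (fun q => q.1 ∪ q.2 = S)).card
      = if S.card ≤ 3 then 3 ^ S.card else 50 := by decide

lemma himg9 : Finset.image₂ (· ∪ ·) F9 F9 = (Finset.univ : Finset (Finset (Fin 5))) := by
  decide

lemma hF9card : F9.card = 26 := by decide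

lemma hprodcard9 : (F9 ×ˢ F9).card = 676 := by
  rw [Finset.card_product, hF9card]

/-- value of the count as a real, as function of the card -/
noncomputable def q9 (k : ℕ) : ℝ := if k ≤ 3 then 3 ^ k else 50

lemma hp9 (S : Finset (Fin 5)) : unionDist9 S = q9 S.card / 676 := by
  unfold unionDist9 q9
  rw [hcount9 S, hprodcard9]
  split_ifs <;> push_cast <;> ring

lemma key9 : 676 * Real.logb 2 26 < 1005 * Real.logb 2 3 + 300 * Real.logb 2 50 := by
  have hnat : (26:ℕ)^676 < 3^1005 * 50^300 := by decide
  have hreal : (26:ℝ)^676 < 3^1005 * 50^300 := by exact_mod_cast hnat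
  have h := Real.logb_lt_logb (b := 2) (by norm_num) (by positivity) hreal
  rwa [Real.logb_pow, Real.logb_mul (by positivity) (by positivity),
    Real.logb_pow, Real.logb_pow] at h

/-- For `F = {S ⊆ [5] : |S| ≤ 3}` and `A, B` i.i.d. uniform on `F`:
`H(A) = log₂ 26` and `H(A ∪ B) < H(A)`. -/
theorem stmt9 :
    entropy F9 (fun _ => (F9.card : ℝ)⁻¹) = Real.logb 2 26 ∧
    entropy (Finset.image₂ (· ∪ ·) F9 F9) unionDist9
      < entropy F9 (fun _ => (F9.card : ℝ)⁻¹) := by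
  have h1 : entropy F9 (fun _ => (F9.card : ℝ)⁻¹) = Real.logb 2 26 := by
    unfold entropy
    rw [Finset.sum_const, hF9card]
    simp only [Real.logb_inv, nsmul_eq_mul]
    push_cast
    ring
  refine ⟨h1, ?_⟩
  rw [h1]
  have h2 : entropy (Finset.image₂ (· ∪ ·) F9 F9) unionDist9
      = ∑ k ∈ Finset.range 6,
          (Nat.choose 5 k) • (-(q9 k / 676 * Real.logb 2 (q9 k / 676))) := by
    unfold entropy
    rw [himg9, ← Finset.powerset_univ]
    have := Finset.sum_powerset_apply_card
      (f := fun k => -(q9 k / 676 * Real.logb 2 (q9 k / 676)))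
      (x := (Finset.univ : Finset (Fin 5)))
    simp only [Finset.card_univ, Fintype.card_fin] at this
    rw [← this]
    exact Finset.sum_congr rfl fun S _ => by rw [hp9]
  rw [h2]
  have e676 : Real.logb 2 676 = 2 * Real.logb 2 26 := by
    rw [show (676:ℝ) = 26^2 by norm_num, Real.logb_pow]
    norm_num
  have ediv : ∀ a : ℝ, a ≠ 0 →
      Real.logb 2 (a / 676) = Real.logb 2 a - 2 * Real.logb 2 26 := by
    intro a ha
    rw [Real.logb_div ha (by norm_num), e676]
  have e9 : Real.logb 2 9 = 2 * Real.logb 2 3 := by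
    rw [show (9:ℝ) = 3^2 by norm_num, Real.logb_pow]; norm_num
  have e27 : Real.logb 2 27 = 3 * Real.logb 2 3 := by
    rw [show (27:ℝ) = 3^3 by norm_num, Real.logb_pow]; norm_num
  have hq0 : q9 0 = 1 := by norm_num [q9]
  have hq1 : q9 1 = 3 := by norm_num [q9]
  have hq2 : q9 2 = 9 := by norm_num [q9]
  have hq3 : q9 3 = 27 := by norm_num [q9]
  have hq4 : q9 4 = 50 := by norm_num [q9]
  have hq5 : q9 5 = 50 := by norm_num [q9]
  rw [Finset.sum_range_succ, Finset.sum_range_succ, Finset.sum_range_succ,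
    Finset.sum_range_succ, Finset.sum_range_succ, Finset.sum_range_succ,
    Finset.sum_range_zero]
  rw [hq0, hq1, hq2, hq3, hq4, hq5]
  rw [ediv 1 (by norm_num), ediv 3 (by norm_num), ediv 9 (by norm_num),
    ediv 27 (by norm_num), ediv 50 (by norm_num)]
  rw [e9, e27, Real.logb_one]
  simp only [nsmul_eq_mul]
  norm_num [Nat.choose]
  linarith [key9]
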